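/- Let n be a natural number, let S be a subset of ℝⁿ (EuclideanSpace ℝ (Fin n)), and let f : ℝⁿ → ℝⁿ be a map that preserves all pairwise distances on S, i.e., dist(f(x), f(y)) = dist(x, y) for all x, y ∈ S. Then there exists an isometry g of ℝⁿ onto itself (a bijective distance-preserving map, realizable as an affine isometry equivalence) such that g(x) = f(x) for every x ∈ S. -/

import Mathlib

open Submodule Module

private lemma inner_sub_sub_polar {V : Type*} [NormedAddCommGroup V] [InnerProductSpace ℝ V]
    (a b c : V) :
    inner ℝ (a - b) (c - b) = ((‖a - b‖ ^ 2 + ‖c - b‖ ^ 2 - ‖a - c‖ ^ 2) / 2 : ℝ) := by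
  have h : a - c = (a - b) - (c - b) := by abel
  rw [h, norm_sub_sq_real (a - b) (c - b)]
  ring

/-- Any map preserving all pairwise distances on a subset `S` of `ℝⁿ` agrees on `S`
with a global isometry of `ℝⁿ` (an affine isometry equivalence). -/
theorem exists_affineIsometryEquiv_extending (n : ℕ) (S : Set (EuclideanSpace ℝ (Fin n)))
    (f : EuclideanSpace ℝ (Fin n) → EuclideanSpace ℝ (Fin n))
    (hf : ∀ x ∈ S, ∀ y ∈ S, dist (f x) (f y) = dist x y) :
    ∃ g : EuclideanSpace ℝ (Fin n) ≃ᵃⁱ[ℝ] EuclideanSpace ℝ (Fin n),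
      ∀ x ∈ S, g x = f x := by
  let V := EuclideanSpace ℝ (Fin n)
  rcases S.eq_empty_or_nonempty with rfl | ⟨p₀, hp₀⟩
  · exact ⟨AffineIsometryEquiv.refl ℝ V, fun x hx => absurd hx (Set.notMem_empty x)⟩
  -- translated set
  set T : Set V := (fun x => x - p₀) '' S with hT
  set F : V → V := fun u => f (u + p₀) - f p₀ with hF
  -- norms preserved
  have normF : ∀ u ∈ T, ‖F u‖ = ‖u‖ := by
    rintro u ⟨x, hx, rfl⟩
    simp only [hF, sub_add_cancel]
    rw [← dist_eq_norm, ← dist_eq_norm, hf x hx p₀ hp₀]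
  -- inner products preserved
  have innerF : ∀ u ∈ T, ∀ v ∈ T, (inner ℝ (F u) (F v) : ℝ) = inner ℝ u v := by
    rintro u ⟨x, hx, rfl⟩ v ⟨y, hy, rfl⟩
    simp only [hF, sub_add_cancel]
    have h1 : (inner ℝ (f x - f p₀) (f y - f p₀) : ℝ) =
        (‖f x - f p₀‖ ^ 2 + ‖f y - f p₀‖ ^ 2 - ‖f x - f y‖ ^ 2) / 2 :=
      inner_sub_sub_polar _ _ _
    have h2 : (inner ℝ (x - p₀) (y - p₀) : ℝ) =
        (‖x - p₀‖ ^ 2 + ‖y - p₀‖ ^ 2 - ‖x - y‖ ^ 2) / 2 :=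
      inner_sub_sub_polar _ _ _
    rw [h1, h2, ← dist_eq_norm, ← dist_eq_norm, ← dist_eq_norm, ← dist_eq_norm, ← dist_eq_norm,
      ← dist_eq_norm, hf x hx p₀ hp₀, hf y hy p₀ hp₀, hf x hx y hy]
  -- find a basis of the span contained in T
  obtain ⟨B, hBT, hBspan, hBind⟩ := exists_linearIndependent ℝ T
  set W : Submodule ℝ V := span ℝ T with hW
  have hspan_eq : span ℝ (Set.range ((↑) : B → V)) = W := by rw [Subtype.range_coe, hBspan]
  let b : Basis B ℝ W := (Basis.span hBind).map (LinearEquiv.ofEq _ _ hspan_eq)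
  have hb : ∀ i : B, (b i : V) = (i : V) := by
    intro i
    simp only [b, Basis.map_apply, LinearEquiv.coe_ofEq_apply]
    exact congrArg Subtype.val (Module.Basis.span_apply hBind i)
  -- define the linear map on W
  let L : W →ₗ[ℝ] V := b.constr ℝ (fun i => F i)
  have hLb : ∀ i : B, L (b i) = F i := fun i => b.constr_basis ℝ _ i
  -- L preserves inner products
  have innerL : ∀ w w' : W, (inner ℝ (L w) (L w') : ℝ) = inner ℝ (w : V) (w' : V) := by
    have hBB : (innerₗ V).compl₁₂ L L = (innerₗ V).compl₁₂ W.subtype W.subtype := by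
      apply LinearMap.ext_basis b b
      intro i j
      simp only [LinearMap.compl₁₂_apply, innerₗ_apply_apply, hLb, Submodule.coe_subtype, hb]
      exact innerF _ (hBT i.2) _ (hBT j.2)
    intro w w'
    have := LinearMap.congr_fun (LinearMap.congr_fun hBB w) w'
    simpa using this
  have normL : ∀ w : W, ‖L w‖ = ‖w‖ := by
    intro w
    have h1 : ‖L w‖ ^ 2 = ‖(w : V)‖ ^ 2 := by
      rw [← real_inner_self_eq_norm_sq, ← real_inner_self_eq_norm_sq, innerL]
    rw [← Submodule.norm_coe w]
    nlinarith [norm_nonneg (L w), norm_nonneg (w : V), h1]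
  -- L agrees with F on T
  have hTW : T ⊆ W := subset_span
  have hLF : ∀ u (hu : u ∈ T), L ⟨u, hTW hu⟩ = F u := by
    intro u hu
    have key : ∀ w : W, (inner ℝ (F u) (L w) : ℝ) = inner ℝ u (w : V) := by
      have hφ : ((innerₗ V).flip (F u)).comp L = ((innerₗ V).flip u).comp W.subtype := by
        apply b.ext
        intro i
        simp only [LinearMap.comp_apply, LinearMap.flip_apply, innerₗ_apply_apply, hLb,
          Submodule.coe_subtype, hb]
        exact innerF _ (hBT i.2) _ hu
      intro w
      simpa using LinearMap.congr_fun hφ w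
    set w : W := ⟨u, hTW hu⟩ with hw
    have hz : ‖F u - L w‖ ^ 2 = 0 := by
      rw [norm_sub_sq_real]
      have h1 : ‖F u‖ = ‖u‖ := normF u hu
      have h2 : (inner ℝ (F u) (L w) : ℝ) = inner ℝ u u := by
        exact key w
      have h3 : ‖L w‖ = ‖u‖ := by rw [normL w, ← Submodule.norm_coe w]
      rw [h1, h2, h3, real_inner_self_eq_norm_sq]
      ring
    have hz' := pow_eq_zero_iff (n := 2) (by norm_num) |>.mp hz
    rw [norm_eq_zero, sub_eq_zero] at hz'
    exact hz'.symm
  -- extend to a global linear isometry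
  let Li : W →ₗᵢ[ℝ] V := ⟨L, normL⟩
  let Lext : V →ₗᵢ[ℝ] V := Li.extend
  let Leq : V ≃ₗᵢ[ℝ] V := Lext.toLinearIsometryEquiv rfl
  refine ⟨(AffineIsometryEquiv.constVAdd ℝ V (-p₀)).trans
    (Leq.toAffineIsometryEquiv.trans (AffineIsometryEquiv.constVAdd ℝ V (f p₀))), ?_⟩
  intro x hx
  have hmem : x - p₀ ∈ T := ⟨x, hx, rfl⟩
  have h1 : Lext (x - p₀) = f x - f p₀ := by
    have := Li.extend_apply ⟨x - p₀, hTW hmem⟩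
    rw [show ((⟨x - p₀, hTW hmem⟩ : W) : V) = x - p₀ from rfl] at this
    rw [this]
    show L ⟨x - p₀, hTW hmem⟩ = _
    rw [hLF _ hmem]
    simp [hF, sub_add_cancel]
  show f p₀ + Leq (-p₀ + x) = f x
  have h2 : Leq (-p₀ + x) = Lext (x - p₀) := by
    rw [neg_add_eq_sub]; rfl
  rw [h2, h1]
  abel
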